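/- For every positive integer k and n ≥ 2 there exist a ∈ Z^n with nonzero entries, gcd(a)=1, ‖a‖_∞ = k, and c ∈ Q^n such that Gap(c,a) = (‖a‖_∞ − 1)‖c‖_1. Concretely, for a = (k,...,k,1) and c = e_n, one has b = k−1 gives IP(c,a,b) = k−1 and LP(c,a,b) = 0, so IG(c,a,b) = k−1 = (k−1)‖c‖_1. -/
import Mathlib


/-- for every `k ≥ 1` and `n ≥ 2` there exist a primitive integer
vector `a` with nonzero entries and `‖a‖_∞ = k`, and a cost vector `c ∈ ℚ^n`,
such that for some `b` the integer knapsack problem is feasible and bounded and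
its integrality gap equals `(‖a‖_∞ − 1)·‖c‖₁`; hence
`Gap(c,a) = (‖a‖_∞ − 1)·‖c‖₁`. -/
theorem stmt_15 (n k : ℕ) (hn : 2 ≤ n) (hk : 1 ≤ k) :
    ∃ (a : Fin n → ℤ) (c : Fin n → ℚ),
      (∀ i, a i ≠ 0) ∧ Finset.univ.gcd a = 1 ∧
      (Finset.univ.sup fun i => (a i).natAbs) = k ∧
      ∃ (b : ℤ) (P : Set (Fin n → ℝ)) (IPvals : Set ℝ),
        P = {x | (∀ i, 0 ≤ x i) ∧ ∑ i, (a i : ℝ) * x i = (b : ℝ)} ∧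
        IPvals = {t | ∃ z : Fin n → ℤ, (fun i => (z i : ℝ)) ∈ P ∧
            t = ∑ i, (c i : ℝ) * (z i : ℝ)} ∧
        IPvals.Nonempty ∧ BddBelow IPvals ∧
        sInf IPvals - sInf {t | ∃ x ∈ P, t = ∑ i, (c i : ℝ) * x i} =
          ((k : ℝ) - 1) * ∑ i, |(c i : ℝ)| := by
  have hkR : (1:ℝ) ≤ (k:ℝ) := by exact_mod_cast hk
  have hkZ : (1:ℤ) ≤ (k:ℤ) := by exact_mod_cast hk
  set L : Fin n := ⟨n - 1, by omega⟩ with hLdef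
  set i0 : Fin n := ⟨0, by omega⟩ with hi0def
  have hi0L : i0 ≠ L := by
    simp only [hi0def, hLdef, ne_eq, Fin.mk.injEq]
    omega
  set a : Fin n → ℤ := fun i => if i = L then 1 else (k : ℤ) with ha
  set c : Fin n → ℚ := fun i => if i = L then 1 else 0 with hc
  refine ⟨a, c, ?_, ?_, ?_, ?_⟩
  · intro i; simp only [ha]; split
    · exact one_ne_zero
    · exact_mod_cast Nat.one_le_iff_ne_zero.mp hk
  · have h : Finset.univ.gcd a ∣ a L := Finset.gcd_dvd (Finset.mem_univ L)
    have haL : a L = 1 := by simp [ha]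
    rw [haL] at h
    rw [← Finset.normalize_gcd, normalize_eq_one]
    exact isUnit_of_dvd_one h
  · apply le_antisymm
    · apply Finset.sup_le
      intro i _
      simp only [ha]; split
      · simpa using hk
      · simp
    · have := Finset.le_sup (f := fun i => (a i).natAbs) (Finset.mem_univ i0)
      simpa [ha, hi0L] using this
  · set P : Set (Fin n → ℝ) :=
      {x | (∀ i, 0 ≤ x i) ∧ ∑ i, (a i : ℝ) * x i = (((k:ℤ) - 1 : ℤ) : ℝ)} with hP
    set IPv : Set ℝ := {t | ∃ z : Fin n → ℤ, (fun i => (z i : ℝ)) ∈ P ∧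
        t = ∑ i, (c i : ℝ) * (z i : ℝ)} with hIPv
    -- the special integer point
    have hIPmem : ((k:ℝ) - 1) ∈ IPv := by
      refine ⟨fun i => if i = L then (k:ℤ)-1 else 0, ⟨?_, ?_⟩, ?_⟩
      · intro i; dsimp only; split
        · push_cast; linarith
        · simp
      · rw [Finset.sum_eq_single L]
        · simp [ha]
        · intro i _ hi; simp [hi]
        · simp
      · rw [Finset.sum_eq_single L]
        · simp [hc]
        · intro i _ hi; simp [hi]
        · simp
    -- lower bound for IP values
    have hIPlb : ∀ t ∈ IPv, (k:ℝ) - 1 ≤ t := by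
      rintro t ⟨z, ⟨hz0, hzsum⟩, rfl⟩
      have hz0' : ∀ i, 0 ≤ z i := fun i => by
        have := hz0 i; simp only at this; exact_mod_cast this
      have hzsum' : ∑ i, (a i : ℝ) * (z i : ℝ) = (((k:ℤ) - 1 : ℤ) : ℝ) := by
        simpa using hzsum
      have hzsumZ : ∑ i, a i * z i = (k:ℤ) - 1 := by exact_mod_cast hzsum'
      have hsplit : ∑ i, a i * z i = a L * z L + ∑ i ∈ Finset.univ.erase L, a i * z i :=
        (Finset.add_sum_erase _ _ (Finset.mem_univ L)).symm
      have hterm : ∀ i ∈ Finset.univ.erase L, a i * z i = (k:ℤ) * z i := by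
        intro i hi
        have : i ≠ L := (Finset.mem_erase.mp hi).1
        simp [ha, this]
      rw [hsplit, Finset.sum_congr rfl hterm, ← Finset.mul_sum] at hzsumZ
      set T : ℤ := ∑ i ∈ Finset.univ.erase L, z i with hT
      have hT0 : 0 ≤ T := Finset.sum_nonneg fun i _ => hz0' i
      have haL : a L = 1 := by simp [ha]
      rw [haL, one_mul] at hzsumZ
      have hzL : (k:ℤ) - 1 ≤ z L := by
        rcases hT0.lt_or_eq with h | h
        · exfalso
          have h1 : (k:ℤ) * 1 ≤ (k:ℤ) * T :=
            mul_le_mul_of_nonneg_left (by omega) (by linarith)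
          rw [mul_one] at h1
          have := hz0' L
          linarith
        · rw [← h, mul_zero] at hzsumZ
          omega
      have hval : ∑ i, (c i : ℝ) * (z i : ℝ) = (z L : ℝ) := by
        rw [Finset.sum_eq_single L]
        · simp [hc]
        · intro i _ hi; simp [hc, hi]
        · simp
      rw [hval]
      have : (((k:ℤ) - 1 : ℤ) : ℝ) ≤ ((z L : ℤ) : ℝ) := by exact_mod_cast hzL
      push_cast at this
      linarith
    refine ⟨(k : ℤ) - 1, P, IPv, rfl, rfl, ⟨_, hIPmem⟩, ⟨(k:ℝ)-1, hIPlb⟩, ?_⟩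
    have hsumabs : ∑ i, |(c i : ℝ)| = 1 := by
      rw [Finset.sum_eq_single L]
      · simp [hc]
      · intro i _ hi; simp [hc, hi]
      · simp
    have hIPinf : sInf IPv = (k:ℝ) - 1 :=
      le_antisymm (csInf_le ⟨(k:ℝ)-1, hIPlb⟩ hIPmem) (le_csInf ⟨_, hIPmem⟩ hIPlb)
    set SLP : Set ℝ := {t | ∃ x ∈ P, t = ∑ i, (c i : ℝ) * x i} with hSLP
    have hLPmem : (0:ℝ) ∈ SLP := by
      refine ⟨fun i => if i = i0 then ((k:ℝ)-1)/(k:ℝ) else 0, ⟨?_, ?_⟩, ?_⟩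
      · intro i; dsimp only; split
        · apply div_nonneg <;> linarith
        · simp
      · rw [Finset.sum_eq_single i0]
        · have h1 : (a i0 : ℝ) = (k:ℝ) := by simp [ha, hi0L]
          have hkne : (k:ℝ) ≠ 0 := by linarith
          dsimp only; rw [if_pos rfl, h1]
          push_cast
          field_simp
        · intro i _ hi; simp [hi]
        · simp
      · rw [Finset.sum_eq_single i0]
        · simp [hc, hi0L]
        · intro i _ hi; simp [hi]
        · simp
    have hLPlb : ∀ t ∈ SLP, (0:ℝ) ≤ t := by
      rintro t ⟨x, ⟨hx0, hxsum⟩, rfl⟩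
      have hval : ∑ i, (c i : ℝ) * x i = x L := by
        rw [Finset.sum_eq_single L]
        · simp [hc]
        · intro i _ hi; simp [hc, hi]
        · simp
      rw [hval]; exact hx0 L
    have hLPinf : sInf SLP = 0 :=
      le_antisymm (csInf_le ⟨0, hLPlb⟩ hLPmem) (le_csInf ⟨0, hLPmem⟩ hLPlb)
    rw [hIPinf, hLPinf, hsumabs]
    ring
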